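/- The assignment sending a non-crossing diagram D to its associated monomial m_D = x^{α(D)} y^{β(D)} in the Weyl algebra is injective: if D and D' are non-crossing diagrams with m_D = m_{D'}, then D = D'. -/

import Mathlib

/-- Lexicographic (weak) order on chords `(i,j)`. -/
def chordLe (c d : ℕ × ℕ) : Prop := c.1 < d.1 ∨ (c.1 = d.1 ∧ c.2 ≤ d.2)

/-- A diagram `D` (a lexicographically weakly increasing list of chords) is non-crossing
if every chord `(i,j)` satisfies `i < j` and whenever chords `c, c'` of `D` satisfy
`c.1 < c'.1 < c.2`, then `c'.2 ≤ c.2`. -/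
def NonCrossing (D : List (ℕ × ℕ)) : Prop :=
  (∀ c ∈ D, c.1 < c.2) ∧ ∀ c ∈ D, ∀ c' ∈ D, c.1 < c'.1 → c'.1 < c.2 → c'.2 ≤ c.2

instance : IsAntisymm (ℕ × ℕ) chordLe := ⟨by
  rintro ⟨a, b⟩ ⟨c, d⟩ (h | ⟨h1, h2⟩) (h' | ⟨h1', h2'⟩) <;> simp_all <;> omega⟩

/-- If `i` is the largest initial vertex and `j` the smallest terminal vertex exceeding `i`,
then `(i, j)` is a chord of a non-crossing multiset of chords. -/
lemma chord_mem (M : Multiset (ℕ × ℕ))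
    (h1 : ∀ c ∈ M, c.1 < c.2)
    (h2 : ∀ c ∈ M, ∀ c' ∈ M, c.1 < c'.1 → c'.1 < c.2 → c'.2 ≤ c.2)
    (i j : ℕ)
    (hi : i ∈ M.map Prod.fst)
    (hj : j ∈ M.map Prod.snd)
    (hmax : ∀ q ∈ M.map Prod.fst, q ≤ i)
    (hmin : ∀ q ∈ M.map Prod.snd, i < q → j ≤ q)
    (hij : i < j) : (i, j) ∈ M := by
  obtain ⟨c, hc, hc1⟩ := Multiset.mem_map.mp hi
  obtain ⟨d, hd, hd2⟩ := Multiset.mem_map.mp hj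
  have hd1 : d.1 ≤ i := hmax d.1 (Multiset.mem_map_of_mem _ hd)
  rcases eq_or_lt_of_le hd1 with heq | hlt
  · have : d = (i, j) := by
      rw [← heq, ← hd2]
    rwa [← this]
  · -- d.1 < i = c.1, and c.1 < d.2 = j, so c.2 ≤ d.2 = j
    have hcd : c.2 ≤ d.2 := h2 d hd c hc (by omega) (by rw [hd2]; omega)
    have hc2 : i < c.2 := by rw [← hc1]; exact h1 c hc
    have : j ≤ c.2 := hmin c.2 (Multiset.mem_map_of_mem _ hc) hc2
    have hceq : c = (i, j) := by
      have : c.2 = j := by omega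
      rw [← hc1, ← this]
    rwa [← hceq]

lemma key : ∀ n (M M' : Multiset (ℕ × ℕ)), Multiset.card M = n →
    (∀ c ∈ M, c.1 < c.2) →
    (∀ c ∈ M, ∀ c' ∈ M, c.1 < c'.1 → c'.1 < c.2 → c'.2 ≤ c.2) →
    (∀ c ∈ M', c.1 < c.2) →
    (∀ c ∈ M', ∀ c' ∈ M', c.1 < c'.1 → c'.1 < c.2 → c'.2 ≤ c.2) →
    M.map Prod.fst = M'.map Prod.fst → M.map Prod.snd = M'.map Prod.snd →
    M = M' := by
  intro n
  induction n using Nat.strong_induction_on with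
  | _ n ih =>
  intro M M' hcard h1 h2 h1' h2' hA hB
  rcases eq_or_ne M 0 with rfl | hM0
  · have h0 : M'.map Prod.fst = 0 := by simpa using hA.symm
    rw [Multiset.map_eq_zero] at h0
    rw [h0]
  · have hA0 : M.map Prod.fst ≠ 0 := by simpa [Multiset.map_eq_zero]
    have hFne : (M.map Prod.fst).toFinset.Nonempty := by
      rwa [Multiset.toFinset_nonempty]
    set i := (M.map Prod.fst).toFinset.max' hFne with hi_def
    have hi : i ∈ M.map Prod.fst :=
      Multiset.mem_toFinset.mp ((M.map Prod.fst).toFinset.max'_mem hFne)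
    have hmax : ∀ q ∈ M.map Prod.fst, q ≤ i := fun q hq =>
      (M.map Prod.fst).toFinset.le_max' q (Multiset.mem_toFinset.mpr hq)
    obtain ⟨c, hc, hc1⟩ := Multiset.mem_map.mp hi
    have hSne : ((M.map Prod.snd).toFinset.filter (fun q => i < q)).Nonempty := by
      refine ⟨c.2, Finset.mem_filter.mpr ⟨Multiset.mem_toFinset.mpr
        (Multiset.mem_map_of_mem _ hc), ?_⟩⟩
      rw [← hc1]; exact h1 c hc
    set j := ((M.map Prod.snd).toFinset.filter (fun q => i < q)).min' hSne with hj_def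
    have hjS := ((M.map Prod.snd).toFinset.filter (fun q => i < q)).min'_mem hSne
    rw [Finset.mem_filter] at hjS
    have hj : j ∈ M.map Prod.snd := Multiset.mem_toFinset.mp hjS.1
    have hij : i < j := hjS.2
    have hmin : ∀ q ∈ M.map Prod.snd, i < q → j ≤ q := fun q hq hq' =>
      Finset.min'_le _ q (Finset.mem_filter.mpr ⟨Multiset.mem_toFinset.mpr hq, hq'⟩)
    have hcM : (i, j) ∈ M := chord_mem M h1 h2 i j hi hj hmax hmin hij
    have hcM' : (i, j) ∈ M' :=
      chord_mem M' h1' h2' i j (hA ▸ hi) (hB ▸ hj) (hA ▸ hmax) (hB ▸ hmin) hij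
    have e1 : M = (i, j) ::ₘ M.erase (i, j) := (Multiset.cons_erase hcM).symm
    have e1' : M' = (i, j) ::ₘ M'.erase (i, j) := (Multiset.cons_erase hcM').symm
    have hAe : (M.erase (i, j)).map Prod.fst = (M'.erase (i, j)).map Prod.fst := by
      have h : (i : ℕ) ::ₘ (M.erase (i, j)).map Prod.fst
          = i ::ₘ (M'.erase (i, j)).map Prod.fst := by
        rw [show (i : ℕ) = Prod.fst (i, j) from rfl, ← Multiset.map_cons, ← Multiset.map_cons,
          ← e1, ← e1', hA]
      exact (Multiset.cons_inj_right _).mp h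
    have hBe : (M.erase (i, j)).map Prod.snd = (M'.erase (i, j)).map Prod.snd := by
      have h : (j : ℕ) ::ₘ (M.erase (i, j)).map Prod.snd
          = j ::ₘ (M'.erase (i, j)).map Prod.snd := by
        rw [show (j : ℕ) = Prod.snd (i, j) from rfl, ← Multiset.map_cons, ← Multiset.map_cons,
          ← e1, ← e1', hB]
      exact (Multiset.cons_inj_right _).mp h
    have hnpos : 0 < n := by
      rw [← hcard]; exact Multiset.card_pos.mpr hM0
    have hcard' : Multiset.card (M.erase (i, j)) = n - 1 := by
      rw [Multiset.card_erase_of_mem hcM, hcard]; rfl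
    have heq := ih (n - 1) (by omega) (M.erase (i, j)) (M'.erase (i, j)) hcard'
      (fun c hc => h1 c (Multiset.mem_of_mem_erase hc))
      (fun c hc c' hc' => h2 c (Multiset.mem_of_mem_erase hc) c' (Multiset.mem_of_mem_erase hc'))
      (fun c hc => h1' c (Multiset.mem_of_mem_erase hc))
      (fun c hc c' hc' => h2' c (Multiset.mem_of_mem_erase hc) c' (Multiset.mem_of_mem_erase hc'))
      hAe hBe
    rw [e1, e1', heq]

/-- The map sending a non-crossing diagram `D` to its associated monomial
`m_D = x^{α(D)} y^{β(D)}`, where `α(D)_q` (resp. `β(D)_q`) is the number of chords of `D`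
with initial (resp. terminal) vertex `q`, is injective. -/
theorem stmt3 (D D' : List (ℕ × ℕ))
    (hD : D.Pairwise chordLe) (hD' : D'.Pairwise chordLe)
    (hND : NonCrossing D) (hND' : NonCrossing D')
    (hα : ∀ q, (D.map Prod.fst).count q = (D'.map Prod.fst).count q)
    (hβ : ∀ q, (D.map Prod.snd).count q = (D'.map Prod.snd).count q) :
    D = D' := by
  have hA : (↑D : Multiset (ℕ × ℕ)).map Prod.fst = (↑D' : Multiset (ℕ × ℕ)).map Prod.fst := by
    refine Multiset.ext.mpr fun q => ?_
    simpa [Multiset.coe_count] using hα q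
  have hB : (↑D : Multiset (ℕ × ℕ)).map Prod.snd = (↑D' : Multiset (ℕ × ℕ)).map Prod.snd := by
    refine Multiset.ext.mpr fun q => ?_
    simpa [Multiset.coe_count] using hβ q
  have hM : (↑D : Multiset (ℕ × ℕ)) = ↑D' := by
    refine key (Multiset.card (↑D : Multiset (ℕ × ℕ))) ↑D ↑D' rfl ?_ ?_ ?_ ?_ hA hB
    · intro c hc; exact hND.1 c (Multiset.mem_coe.mp hc)
    · intro c hc c' hc'
      exact hND.2 c (Multiset.mem_coe.mp hc) c' (Multiset.mem_coe.mp hc')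
    · intro c hc; exact hND'.1 c (Multiset.mem_coe.mp hc)
    · intro c hc c' hc'
      exact hND'.2 c (Multiset.mem_coe.mp hc) c' (Multiset.mem_coe.mp hc')
  exact List.Perm.eq_of_pairwise' hD hD' (Multiset.coe_eq_coe.mp hM)
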